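/- Let n ∈ ℕ and let Γ be a countable subgroup of the group of isometries (surjective self-isometries) of the Euclidean space ℝⁿ. Then there exists a point x ∈ ℝⁿ such that g(x) ≠ x for every g ∈ Γ with g not equal to the identity; that is, x has trivial stabilizer under the action of Γ. -/

import Mathlib

open Set Metric

lemma linpart_fix {E : Type*} [NormedAddCommGroup E] [NormedSpace ℝ E]
    (L : E ≃ₗᵢ[ℝ] E) (r : ℝ) (hr : 0 < r) (h : ∀ v : E, ‖v‖ < r → L v = v) :
    ∀ v : E, L v = v := by
  intro v
  set t : ℝ := r / (2 * (‖v‖ + 1)) with ht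
  have hpos : 0 < ‖v‖ + 1 := by positivity
  have htpos : 0 < t := by positivity
  have hnorm : ‖t • v‖ < r := by
    rw [norm_smul, Real.norm_eq_abs, abs_of_pos htpos]
    calc t * ‖v‖ < t * (‖v‖ + 1) := by nlinarith
    _ = r / 2 := by rw [ht, div_mul_eq_mul_div, div_eq_div_iff (by positivity) (by norm_num)]; ring
    _ < r := by linarith
  have h2 := h (t • v) hnorm
  rw [map_smul] at h2
  exact smul_right_injective E (ne_of_gt htpos) h2

lemma fixed_interior_empty {E : Type*} [NormedAddCommGroup E] [NormedSpace ℝ E]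
    (g : E ≃ᵢ E) (hg : g ≠ 1) : interior {x | g x = x} = ∅ := by
  by_contra h
  obtain ⟨c, hc⟩ := Set.nonempty_iff_ne_empty.2 h
  obtain ⟨r, hr, hball⟩ := Metric.isOpen_iff.1 isOpen_interior c hc
  set A := g.toRealAffineIsometryEquiv with hA
  have hgA : ∀ x, g x = A x := fun x => (congrFun (g.coeFn_toRealAffineIsometryEquiv) x).symm
  have hfix : ∀ x ∈ Metric.ball c r, g x = x := by
    intro x hx
    have h1 : x ∈ interior {x | g x = x} := hball hx
    have h2 : x ∈ {x | g x = x} := interior_subset h1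
    exact h2
  have hAc : A c = c := by rw [← hgA]; exact hfix c (Metric.mem_ball_self hr)
  have hLfix : ∀ v : E, ‖v‖ < r → A.linearIsometryEquiv v = v := by
    intro v hv
    have hmem : v +ᵥ c ∈ Metric.ball c r := by
      simp only [Metric.mem_ball, dist_eq_norm, vadd_eq_add, add_sub_cancel_right]
      exact hv
    have h1 : A (v +ᵥ c) = A.linearIsometryEquiv v +ᵥ A c := A.map_vadd c v
    have h2 : g (v +ᵥ c) = v +ᵥ c := hfix _ hmem
    rw [hgA] at h2
    rw [h1, hAc] at h2
    exact vadd_right_cancel c h2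
  have hLid : ∀ v : E, A.linearIsometryEquiv v = v := linpart_fix _ r hr hLfix
  apply hg
  ext x
  have h3 : g x = A ((x - c) +ᵥ c) := by rw [hgA]; congr 1; simp [vadd_eq_add]
  rw [show (1 : E ≃ᵢ E) x = x from rfl, h3, A.map_vadd, hAc, hLid (x - c)]
  simp [vadd_eq_add]

theorem exists_point_trivial_stabilizer (n : ℕ)
    (Γ : Subgroup (EuclideanSpace ℝ (Fin n) ≃ᵢ EuclideanSpace ℝ (Fin n)))
    (hΓ : Countable Γ) :
    ∃ x : EuclideanSpace ℝ (Fin n),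
      ∀ g ∈ Γ, g ≠ 1 → g x ≠ x := by
  classical
  set E := EuclideanSpace ℝ (Fin n)
  let S : Γ → Set E := fun g =>
    if (g : E ≃ᵢ E) = 1 then Set.univ else {x | (g : E ≃ᵢ E) x = x}ᶜ
  have hclosed : ∀ g : Γ, IsClosed {x : E | (g : E ≃ᵢ E) x = x} := fun g =>
    isClosed_eq (g : E ≃ᵢ E).continuous continuous_id
  have ho : ∀ g : Γ, IsOpen (S g) := by
    intro g
    by_cases h : (g : E ≃ᵢ E) = 1
    · simp only [S, if_pos h]; exact isOpen_univ
    · simp only [S, if_neg h]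
      exact (hclosed g).isOpen_compl
  have hd : ∀ g : Γ, Dense (S g) := by
    intro g
    by_cases h : (g : E ≃ᵢ E) = 1
    · simp only [S, if_pos h]; exact dense_univ
    · simp only [S, if_neg h]
      rw [← interior_eq_empty_iff_dense_compl]
      exact fixed_interior_empty _ h
  have hdense := dense_iInter_of_isOpen ho hd
  obtain ⟨x, hx⟩ := hdense.nonempty
  refine ⟨x, fun g hg hg1 => ?_⟩
  have hmem := Set.mem_iInter.1 hx ⟨g, hg⟩
  simp only [S, if_neg hg1] at hmem
  exact hmem
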